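/- Let ψ be a weight function on the vertices ±e_i of the cross-polytope P_n, with w_i = ψ(e_i)+ψ(−e_i). If the minimum of the w_i is attained at least twice, then the regular subdivision of P_n induced by ψ introduces no edges beyond those of P_n itself; equivalently, no segment [e_i, −e_i] is an edge of the subdivision. -/

import Mathlib

open Finset

/-- The 0/1 indicator vector `e_I ∈ ℝⁿ` of a subset `I ⊆ [n]`. -/
def eInd {n : ℕ} (I : Finset (Fin n)) : Fin n → ℝ := fun i => if i ∈ I then 1 else 0

/-- The minimum of `f` over the finite set `s` is attained at least twice. -/
def MinTwiceOn {α : Type*} [DecidableEq α] (s : Finset α) (f : α → ℝ) : Prop :=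
  ∃ a ∈ s, ∃ b ∈ s, a ≠ b ∧ f a = f b ∧ ∀ c ∈ s, f a ≤ f c

/-- The minimum of the three reals `a`, `b`, `c` is attained at least twice. -/
def ThreeMinTwice (a b c : ℝ) : Prop :=
  (a = b ∧ a ≤ c) ∨ (a = c ∧ a ≤ b) ∨ (b = c ∧ b ≤ a)

/-- `x` is a tropical Plücker vector of rank `d` on `[n]`: for every `S` of size `d-2`
and distinct `i,j,k,l ∉ S`, the minimum of the three pairwise sums is attained twice. -/
def TropPlucker (n d : ℕ) (x : Finset (Fin n) → ℝ) : Prop :=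
  ∀ (S : Finset (Fin n)) (i j k l : Fin n),
    S.card = d - 2 → i ∉ S → j ∉ S → k ∉ S → l ∉ S →
    i ≠ j → i ≠ k → i ≠ l → j ≠ k → j ≠ l → k ≠ l →
    ThreeMinTwice
      (x (S ∪ {i, j}) + x (S ∪ {k, l}))
      (x (S ∪ {i, k}) + x (S ∪ {j, l}))
      (x (S ∪ {i, l}) + x (S ∪ {j, k}))

/-- The linear functional on `ℝⁿ` with covector `a`. -/
def lin {n : ℕ} (a : Fin n → ℝ) (z : Fin n → ℝ) : ℝ := ∑ i, a i * z i

/-- `[u,v]` is an edge of the polytope with (finite) vertex set `V`: some linear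
functional attains its maximum over `V` exactly at `u` and `v`, `u ≠ v`. -/
def IsEdge {n : ℕ} (V : Set (Fin n → ℝ)) (u v : Fin n → ℝ) : Prop :=
  u ∈ V ∧ v ∈ V ∧ u ≠ v ∧
  ∃ a : Fin n → ℝ, (∀ z ∈ V, lin a z ≤ lin a u) ∧ lin a u = lin a v ∧
    ∀ z ∈ V, lin a z = lin a u → z = u ∨ z = v

/-- `[u,v]` is a 1-cell of the regular subdivision of the polytope with vertex set `V`
induced by the weights `w`: some affine functional `z ↦ lin a z + c` is dominated by `w`
on `V` and touches `w` exactly at `u` and `v`, `u ≠ v`. -/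
def IsCellEdge {n : ℕ} (V : Set (Fin n → ℝ)) (w : (Fin n → ℝ) → ℝ)
    (u v : Fin n → ℝ) : Prop :=
  u ∈ V ∧ v ∈ V ∧ u ≠ v ∧
  ∃ (a : Fin n → ℝ) (c : ℝ), (∀ z ∈ V, lin a z + c ≤ w z) ∧
    lin a u + c = w u ∧ lin a v + c = w v ∧
    ∀ z ∈ V, lin a z + c = w z → z = u ∨ z = v

/-- The vertex set of `Δ(p,q;n)`: all indicator vectors `e_K` with `|K| ∈ {p,q}`. -/
def DeltaVerts (n p q : ℕ) : Set (Fin n → ℝ) :=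
  {v | ∃ K : Finset (Fin n), (K.card = p ∨ K.card = q) ∧ v = eInd K}

/-- The vertex set of the face `Δ_{S,T}`: the vectors `e_{S∪{i}}` and `e_{T∖{i}}`
for `i ∈ T∖S`. -/
def DeltaSTVerts {n : ℕ} (S T : Finset (Fin n)) : Set (Fin n → ℝ) :=
  {v | ∃ i ∈ T \ S, v = eInd (insert i S) ∨ v = eInd (T.erase i)}

/-- The vertex set of the cross-polytope `P_n`: `{±e_i : i ∈ [n]}`. -/
def CrossVerts (n : ℕ) : Set (Fin n → ℝ) :=
  {v | ∃ i : Fin n, v = eInd {i} ∨ v = -(eInd {i})}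

/-- `M'` is a quotient of `M` (the matroids are concordant):
every flat of `M'` is a flat of `M`. -/
def MatroidQuotient {α : Type*} (M' M : Matroid α) : Prop :=
  ∀ F : Set α, M'.IsFlat F → M.IsFlat F

/-- if the minimum of the `w_i = ψ⁺_i + ψ⁻_i` is attained at least twice,
then the regular subdivision of the cross-polytope `P_n` induced by the weights has no
diagonal `[e_i, -e_i]` as an edge (introduces no new edges). -/
theorem statement3 (n : ℕ) (hn : 2 ≤ n) (ψp ψn : Fin n → ℝ)
    (W : (Fin n → ℝ) → ℝ)
    (hWp : ∀ i : Fin n, W (eInd {i}) = ψp i)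
    (hWn : ∀ i : Fin n, W (-(eInd {i})) = ψn i)
    (hmin : MinTwiceOn Finset.univ (fun i : Fin n => ψp i + ψn i)) :
    ∀ i : Fin n, ¬ IsCellEdge (CrossVerts n) W (eInd {i}) (-(eInd {i})) := by
  intro i hcell
  obtain ⟨_, _, _, a, c, hdom, hu, hv, honly⟩ := hcell
  have hlinp : ∀ j : Fin n, lin a (eInd {j}) = a j := by
    intro j
    simp [lin, eInd, mul_ite]
  have hlinn : ∀ j : Fin n, lin a (-(eInd {j})) = -a j := by
    intro j
    simp [lin, eInd, mul_ite]
  rw [hlinp, hWp] at hu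
  rw [hlinn, hWn] at hv
  have hdp : ∀ j : Fin n, a j + c ≤ ψp j := by
    intro j
    have := hdom (eInd {j}) ⟨j, Or.inl rfl⟩
    rwa [hlinp, hWp] at this
  have hdn : ∀ j : Fin n, -a j + c ≤ ψn j := by
    intro j
    have := hdom (-(eInd {j})) ⟨j, Or.inr rfl⟩
    rwa [hlinn, hWn] at this
  obtain ⟨p, -, q, -, hpq, heq, hle⟩ := hmin
  -- pick j ≠ i attaining the minimum
  obtain ⟨j, hji, hjmin⟩ : ∃ j : Fin n, j ≠ i ∧ ψp j + ψn j = ψp p + ψn p := by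
    by_cases hpi : p = i
    · exact ⟨q, hpi ▸ hpq.symm, heq.symm⟩
    · exact ⟨p, hpi, rfl⟩
  have hle_i : ψp p + ψn p ≤ ψp i + ψn i := hle i (Finset.mem_univ i)
  have h2c : ψp j + ψn j = 2 * c := by
    have h1 := hdp j
    have h2 := hdn j
    linarith
  have hep : a j + c = ψp j := by
    have h1 := hdp j
    have h2 := hdn j
    linarith
  have := honly (eInd {j}) ⟨j, Or.inl rfl⟩ (by rw [hlinp, hWp]; exact hep)
  rcases this with h | h
  · have := congrFun h j
    simp [eInd, hji] at this
  · have := congrFun h j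
    simp [eInd, hji] at this
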